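/- Fix an integer m ≥ 1 and a real b ≠ 0. Let I ⊆ ℝ be a nonempty open interval with 0 ∉ I, and let φ : I → ℝ be twice differentiable and satisfy −τ⁴φ″(τ) + [(m−1)τ³ − bτ²]φ′(τ) + bτφ(τ) = 0 at every τ ∈ I. Then there exist real constants β₁, β₂ such that φ(τ) = β₁·τ^m·exp(b/τ) + β₂·Σ_{l=1}^{m} (b^{m−l}/(m−l)!)·τ^l for all τ ∈ I. -/

import Mathlib

open Real Finset

noncomputable def Y1 (m : ℕ) (b τ : ℝ) : ℝ := τ^m * Real.exp (b/τ)
noncomputable def Y1d (m : ℕ) (b τ : ℝ) : ℝ := ((m:ℝ)/τ - b/τ^2) * Y1 m b τ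
noncomputable def Y2 (m : ℕ) (b τ : ℝ) : ℝ :=
  ∑ l ∈ Finset.Icc 1 m, b^(m-l) / ((m-l).factorial : ℝ) * τ^l
noncomputable def Y2d (m : ℕ) (b τ : ℝ) : ℝ :=
  ∑ l ∈ Finset.Icc 1 m, b^(m-l) / ((m-l).factorial : ℝ) * ((l:ℝ) * τ^(l-1))
noncomputable def Y2dd (m : ℕ) (b τ : ℝ) : ℝ :=
  ∑ l ∈ Finset.Icc 1 m, b^(m-l) / ((m-l).factorial : ℝ) * ((l:ℝ) * (((l:ℝ)-1) * τ^(l-1-1)))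

lemma hasDerivAt_Y1 (m : ℕ) (hm : 1 ≤ m) (b : ℝ) {τ : ℝ} (hτ : τ ≠ 0) :
    HasDerivAt (Y1 m b) (Y1d m b τ) τ := by
  have h2 : HasDerivAt (fun τ : ℝ => b/τ) (-b/τ^2) τ := by
    simpa [div_eq_mul_inv, mul_comm, neg_div] using ((hasDerivAt_inv hτ).const_mul b)
  have h : HasDerivAt (Y1 m b) _ τ := (hasDerivAt_pow m τ).fun_mul h2.exp
  convert h using 1
  have hm1 : (τ:ℝ)^(m-1) * τ = τ^m := by
    rw [← pow_succ, Nat.sub_add_cancel hm]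
  unfold Y1d Y1
  field_simp
  ring_nf
  rw [← hm1]
  ring

noncomputable def Y1dd (m : ℕ) (b τ : ℝ) : ℝ :=
  (-(m:ℝ)/τ^2 + 2*b/τ^3) * Y1 m b τ + ((m:ℝ)/τ - b/τ^2) * Y1d m b τ

lemma hasDerivAt_Y1d (m : ℕ) (hm : 1 ≤ m) (b : ℝ) {τ : ℝ} (hτ : τ ≠ 0) :
    HasDerivAt (Y1d m b) (Y1dd m b τ) τ := by
  have hc : HasDerivAt (fun τ : ℝ => (m:ℝ)/τ - b/τ^2) (-(m:ℝ)/τ^2 + 2*b/τ^3) τ := by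
    have h1 : HasDerivAt (fun τ : ℝ => (m:ℝ)/τ) (-(m:ℝ)/τ^2) τ := by
      simpa [div_eq_mul_inv, mul_comm, neg_div] using ((hasDerivAt_inv hτ).const_mul (m:ℝ))
    have h2 : HasDerivAt (fun τ : ℝ => b/τ^2) (b * (-2/τ^3)) τ := by
      have : HasDerivAt (fun τ : ℝ => b/τ^2) _ τ := ((hasDerivAt_pow 2 τ).inv (pow_ne_zero 2 hτ)).const_mul b
      convert this using 1
      field_simp
      ring
    convert (show HasDerivAt (fun τ : ℝ => (m:ℝ)/τ - b/τ^2) _ τ from h1.sub h2) using 1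
    field_simp
    ring
  simpa [Y1dd] using (show HasDerivAt (Y1d m b) _ τ from hc.fun_mul (hasDerivAt_Y1 m hm b hτ))

lemma hasDerivAt_Y2 (m : ℕ) (b : ℝ) (τ : ℝ) : HasDerivAt (Y2 m b) (Y2d m b τ) τ := by
  unfold Y2 Y2d
  exact HasDerivAt.fun_sum fun l _ => (hasDerivAt_pow l τ).const_mul _

lemma hasDerivAt_Y2d (m : ℕ) (b : ℝ) (τ : ℝ) : HasDerivAt (Y2d m b) (Y2dd m b τ) τ := by
  unfold Y2d Y2dd
  refine HasDerivAt.fun_sum fun l hl => ?_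
  have h1 : 1 ≤ l := (Finset.mem_Icc.mp hl).1
  exact (((hasDerivAt_pow (l-1) τ).const_mul (l:ℝ)).const_mul _).congr_deriv
    (by push_cast [Nat.cast_sub h1]; ring)

lemma keyP (m : ℕ) (hm : 1 ≤ m) (b τ : ℝ) :
    τ^2 * Y2d m b τ - ((m:ℝ)*τ - b) * Y2 m b τ = b^m * τ / ((m-1).factorial : ℝ) := by
  classical
  set G : ℕ → ℝ := fun k => if k < m then b^(m-k) / (((m-1-k).factorial):ℝ) * τ^(k+1) else 0
    with hG
  have h0 : G 0 = b^m * τ / ((m-1).factorial : ℝ) := by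
    have : 0 < m := hm
    simp only [hG, if_pos this, Nat.sub_zero, pow_one]
    ring
  have hgm : G m = 0 := by simp [hG]
  have key : τ^2 * Y2d m b τ - ((m:ℝ)*τ - b) * Y2 m b τ
      = ∑ k ∈ Finset.range m, (G k - G (k+1)) := by
    unfold Y2 Y2d
    rw [Finset.mul_sum, Finset.mul_sum, ← Finset.sum_sub_distrib,
      ← Finset.Ico_add_one_right_eq_Icc, Finset.sum_Ico_eq_sum_range]
    simp only [Nat.add_sub_cancel]
    refine Finset.sum_congr rfl fun k hk => ?_
    have hkm : k < m := Finset.mem_range.mp hk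
    rcases Nat.lt_or_ge (k+1) m with h | h
    · have hmk : m - (1+k) = m - 1 - k := by omega
      set n := m - 1 - k with hn
      have hn1 : 1 ≤ n := by omega
      have hmn : m = n + 1 + k := by omega
      have e1 : m - k = n + 1 := by omega
      have e2 : m - (k+1) = n := by omega
      have e3 : m - 1 - (k+1) = n - 1 := by omega
      have hfac : ((n.factorial):ℝ) = (n:ℝ) * (((n-1).factorial):ℝ) := by
        rw [← Nat.mul_factorial_pred (Nat.one_le_iff_ne_zero.mp hn1)]; push_cast; ring
      simp only [hG, if_pos hkm, if_pos h, hmk, e1, e2, e3, Nat.add_sub_cancel_left]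
      have hfne : (((n-1).factorial:ℝ)) ≠ 0 := Nat.cast_ne_zero.mpr (Nat.factorial_ne_zero _)
      have hnn : (n:ℝ) ≠ 0 := by positivity
      have hmR : (m:ℝ) = (n:ℝ) + 1 + (k:ℝ) := by exact_mod_cast hmn
      rw [hfac, hmR]
      push_cast
      field_simp
      ring
    · have hkm1 : k + 1 = m := by omega
      have e1 : m - (1+k) = 0 := by omega
      have e2 : m - k = 1 := by omega
      have e3 : m - 1 - k = 0 := by omega
      have : ¬ (k + 1 < m) := by omega
      simp only [hG, if_pos hkm, if_neg this, e1, e2, e3, pow_zero, Nat.factorial_zero,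
        Nat.add_sub_cancel_left, Nat.cast_one, pow_one]
      have : (m:ℝ) = (k:ℝ) + 1 := by push_cast [← hkm1]; ring
      rw [this]
      push_cast
      ring
  rw [key, Finset.sum_range_sub' G, h0, hgm]
  ring

lemma eq6 (m : ℕ) (hm : 1 ≤ m) (b τ : ℝ) :
    2*τ*Y2d m b τ + τ^2*Y2dd m b τ - (m:ℝ)*Y2 m b τ - ((m:ℝ)*τ - b)*Y2d m b τ
      = b^m / ((m-1).factorial : ℝ) := by
  have hh : HasDerivAt (fun τ => τ^2 * Y2d m b τ - ((m:ℝ)*τ - b) * Y2 m b τ)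
      (2*τ*Y2d m b τ + τ^2*Y2dd m b τ - (m:ℝ)*Y2 m b τ - ((m:ℝ)*τ - b)*Y2d m b τ) τ := by
    have h1 := (hasDerivAt_pow 2 τ).fun_mul (hasDerivAt_Y2d m b τ)
    have h2 := (((hasDerivAt_id τ).const_mul (m:ℝ)).sub_const b).fun_mul (hasDerivAt_Y2 m b τ)
    convert (show HasDerivAt (fun τ => τ^2 * Y2d m b τ - ((m:ℝ)*τ - b) * Y2 m b τ) _ τ from h1.sub h2) using 1
    simp only [id_eq]; push_cast; ring
  have hh2 : HasDerivAt (fun τ => τ^2 * Y2d m b τ - ((m:ℝ)*τ - b) * Y2 m b τ)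
      (b^m / ((m-1).factorial : ℝ)) τ := by
    have hfun : (fun τ => τ^2 * Y2d m b τ - ((m:ℝ)*τ - b) * Y2 m b τ)
        = fun τ => (b^m / ((m-1).factorial : ℝ)) * τ := by
      funext x; rw [keyP m hm b x]; ring
    rw [hfun]
    simpa using (hasDerivAt_id τ).const_mul (b^m / ((m-1).factorial : ℝ))
  exact hh.unique hh2

lemma ode2 (m : ℕ) (hm : 1 ≤ m) (b : ℝ) {τ : ℝ} (hτ : τ ≠ 0) :
    Y2dd m b τ = (((m:ℝ)-1)/τ - b/τ^2) * Y2d m b τ + (b/τ^3) * Y2 m b τ := by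
  have h1 := keyP m hm b τ
  have h2 := eq6 m hm b τ
  have hτ3 : (τ:ℝ)^3 ≠ 0 := pow_ne_zero _ hτ
  have key : τ^3 * Y2dd m b τ = ((((m:ℝ)-1)*τ^2 - b*τ)*Y2d m b τ + b*Y2 m b τ) := by
    linear_combination τ * h2 - h1
  rw [show (((m:ℝ)-1)/τ - b/τ^2) * Y2d m b τ + (b/τ^3) * Y2 m b τ
      = ((((m:ℝ)-1)*τ^2 - b*τ)*Y2d m b τ + b*Y2 m b τ)/τ^3 by field_simp]
  rw [← key, mul_div_cancel_left₀ _ hτ3]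

lemma ode1 (m : ℕ) (hm : 1 ≤ m) (b : ℝ) {τ : ℝ} (hτ : τ ≠ 0) :
    Y1dd m b τ = (((m:ℝ)-1)/τ - b/τ^2) * Y1d m b τ + (b/τ^3) * Y1 m b τ := by
  unfold Y1dd Y1d
  field_simp
  ring



/-- Every solution of the homogeneous version of (F2) on a nonempty
open interval avoiding `0` is a linear combination of `τ^m·exp(b/τ)` and
`Σ_{l=1}^{m} (b^{m−l}/(m−l)!)·τ^l`. -/
theorem stmt_17 (m : ℕ) (hm : 1 ≤ m) (b : ℝ) (hb : b ≠ 0)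
    (I : Set ℝ) (hIopen : IsOpen I) (hIne : I.Nonempty) (hIconn : I.OrdConnected)
    (h0 : (0:ℝ) ∉ I)
    (φ : ℝ → ℝ)
    (hφ : ∀ τ ∈ I, DifferentiableAt ℝ φ τ)
    (hφ' : ∀ τ ∈ I, DifferentiableAt ℝ (deriv φ) τ)
    (hode : ∀ τ ∈ I,
      -τ^4 * deriv (deriv φ) τ + (((m:ℝ)-1)*τ^3 - b*τ^2) * deriv φ τ
        + b*τ * φ τ = 0) :
    ∃ β₁ β₂ : ℝ, ∀ τ ∈ I,
      φ τ = β₁ * (τ^m * Real.exp (b/τ))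
        + β₂ * ∑ l ∈ Finset.Icc 1 m, b^(m-l) / ((m-l).factorial : ℝ) * τ^l := by
  obtain ⟨τ₀, hτ₀I⟩ := hIne
  have hne : ∀ τ ∈ I, τ ≠ 0 := fun τ hτ h => h0 (h ▸ hτ)
  have hτ₀ : τ₀ ≠ 0 := hne τ₀ hτ₀I
  -- the ODE in normal form
  have hode' : ∀ τ ∈ I, deriv (deriv φ) τ
      = (((m:ℝ)-1)/τ - b/τ^2) * deriv φ τ + (b/τ^3) * φ τ := by
    intro τ hτ
    have h := hode τ hτ
    have hτ0 : τ ≠ 0 := hne τ hτ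
    field_simp
    exact mul_left_cancel₀ hτ0 (by linear_combination (-1) * h)
  -- Wronskian at τ₀
  set W : ℝ := Y1 m b τ₀ * Y2d m b τ₀ - Y1d m b τ₀ * Y2 m b τ₀ with hWdef
  have hWval : W = Real.exp (b/τ₀) * τ₀^m / τ₀^2 * (b^m * τ₀ / ((m-1).factorial:ℝ)) := by
    rw [hWdef, ← keyP m hm b τ₀]
    unfold Y1 Y1d Y1
    field_simp
  have hW : W ≠ 0 := by
    rw [hWval]
    exact mul_ne_zero
      (div_ne_zero (mul_ne_zero (Real.exp_ne_zero _) (pow_ne_zero _ hτ₀)) (pow_ne_zero 2 hτ₀))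
      (div_ne_zero (mul_ne_zero (pow_ne_zero _ hb) hτ₀)
        (Nat.cast_ne_zero.mpr (Nat.factorial_ne_zero _)))
  refine ⟨(φ τ₀ * Y2d m b τ₀ - deriv φ τ₀ * Y2 m b τ₀)/W,
    (Y1 m b τ₀ * deriv φ τ₀ - Y1d m b τ₀ * φ τ₀)/W, ?_⟩
  set β₁ := (φ τ₀ * Y2d m b τ₀ - deriv φ τ₀ * Y2 m b τ₀)/W with hβ₁
  set β₂ := (Y1 m b τ₀ * deriv φ τ₀ - Y1d m b τ₀ * φ τ₀)/W with hβ₂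
  have hval : β₁ * Y1 m b τ₀ + β₂ * Y2 m b τ₀ = φ τ₀ := by
    rw [hβ₁, hβ₂]
    field_simp
    linear_combination φ τ₀ * hWdef
  have hder : β₁ * Y1d m b τ₀ + β₂ * Y2d m b τ₀ = deriv φ τ₀ := by
    rw [hβ₁, hβ₂]
    field_simp
    linear_combination deriv φ τ₀ * hWdef
  intro τ₁ hτ₁I
  show φ τ₁ = β₁ * Y1 m b τ₁ + β₂ * Y2 m b τ₁
  -- find an interval (a,c) with Icc a c ⊆ I containing τ₀ and τ₁
  set u := min τ₀ τ₁ with hu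
  set w := max τ₀ τ₁ with hw
  have huI : u ∈ I := by rcases min_cases τ₀ τ₁ with ⟨h,_⟩|⟨h,_⟩ <;> rw [hu, h] <;> assumption
  have hwI : w ∈ I := by rcases max_cases τ₀ τ₁ with ⟨h,_⟩|⟨h,_⟩ <;> rw [hw, h] <;> assumption
  obtain ⟨ε₁, hε₁, hball₁⟩ := Metric.isOpen_iff.mp hIopen u huI
  obtain ⟨ε₂, hε₂, hball₂⟩ := Metric.isOpen_iff.mp hIopen w hwI
  set a := u - ε₁/2 with ha
  set c := w + ε₂/2 with hc
  have haI : a ∈ I := by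
    apply hball₁
    rw [Metric.mem_ball, Real.dist_eq, ha]
    rw [show u - ε₁/2 - u = -(ε₁/2) by ring, abs_neg, abs_of_nonneg (by linarith)]
    linarith
  have hcI : c ∈ I := by
    apply hball₂
    rw [Metric.mem_ball, Real.dist_eq, hc]
    rw [show w + ε₂/2 - w = ε₂/2 by ring, abs_of_nonneg (by linarith)]
    linarith
  have hIcc : Set.Icc a c ⊆ I := hIconn.out haI hcI
  have huw : u ≤ w := min_le_max
  have hac : a < c := by rw [ha, hc]; linarith
  have hτ₀mem : τ₀ ∈ Set.Ioo a c := by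
    constructor
    · rw [ha]; have : u ≤ τ₀ := min_le_left _ _; linarith
    · rw [hc]; have : τ₀ ≤ w := le_max_left _ _; linarith
  have hτ₁mem : τ₁ ∈ Set.Ioo a c := by
    constructor
    · rw [ha]; have : u ≤ τ₁ := min_le_right _ _; linarith
    · rw [hc]; have : τ₁ ≤ w := le_max_right _ _; linarith
  -- coefficients
  set p : ℝ → ℝ := fun t => ((m:ℝ)-1)/t - b/t^2 with hp
  set q : ℝ → ℝ := fun t => b/t^3 with hq
  have hIccne : ∀ t ∈ Set.Icc a c, t ≠ 0 := fun t ht => hne t (hIcc ht)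
  have hpcont : ContinuousOn p (Set.Icc a c) := by
    apply ContinuousOn.sub
    · exact continuousOn_const.div continuousOn_id fun t ht => hIccne t ht
    · exact continuousOn_const.div (continuousOn_pow 2) fun t ht => pow_ne_zero 2 (hIccne t ht)
  have hqcont : ContinuousOn q (Set.Icc a c) := by
    exact continuousOn_const.div (continuousOn_pow 3) fun t ht => pow_ne_zero 3 (hIccne t ht)
  obtain ⟨Mp, hMp⟩ := isCompact_Icc.exists_bound_of_continuousOn hpcont
  obtain ⟨Mq, hMq⟩ := isCompact_Icc.exists_bound_of_continuousOn hqcont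
  have hamem : a ∈ Set.Icc a c := Set.left_mem_Icc.mpr hac.le
  have hMp0 : 0 ≤ Mp := le_trans (norm_nonneg _) (hMp a hamem)
  have hMq0 : 0 ≤ Mq := le_trans (norm_nonneg _) (hMq a hamem)
  -- clamped time projection
  set pr : ℝ → ℝ := fun t => max a (min c t) with hpr
  have hprmem : ∀ t, pr t ∈ Set.Icc a c :=
    fun t => ⟨le_max_left _ _, max_le hac.le (min_le_left _ _)⟩
  have hprid : ∀ t ∈ Set.Icc a c, pr t = t := by
    intro t ht
    rw [hpr]
    simp only [min_eq_right ht.2, max_eq_right ht.1]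
  -- vector field
  set K : NNReal := ⟨max 1 (Mp + Mq), le_trans zero_le_one (le_max_left _ _)⟩ with hK
  set v : ℝ → ℝ × ℝ → ℝ × ℝ :=
    fun t x => (x.2, q (pr t) * x.1 + p (pr t) * x.2) with hv
  have hlip : ∀ t, LipschitzOnWith K (v t) Set.univ := by
    intro t
    apply LipschitzWith.lipschitzOnWith
    apply LipschitzWith.of_dist_le_mul
    intro x y
    have hKcoe : (K:ℝ) = max 1 (Mp + Mq) := rfl
    rw [hv, Prod.dist_eq, hKcoe]
    have hd1 : dist x.1 y.1 ≤ dist x y := le_max_left _ _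
    have hd2 : dist x.2 y.2 ≤ dist x y := le_max_right _ _
    have hd0 : 0 ≤ dist x y := dist_nonneg
    apply max_le
    · calc dist x.2 y.2 ≤ 1 * dist x y := by linarith
        _ ≤ max 1 (Mp + Mq) * dist x y :=
          mul_le_mul_of_nonneg_right (le_max_left _ _) hd0
    · have hpb : |p (pr t)| ≤ Mp := hMp _ (hprmem t)
      have hqb : |q (pr t)| ≤ Mq := hMq _ (hprmem t)
      calc dist (q (pr t) * x.1 + p (pr t) * x.2) (q (pr t) * y.1 + p (pr t) * y.2)
          = |q (pr t) * (x.1 - y.1) + p (pr t) * (x.2 - y.2)| := by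
            rw [Real.dist_eq]; ring_nf
        _ ≤ |q (pr t) * (x.1 - y.1)| + |p (pr t) * (x.2 - y.2)| := abs_add_le _ _
        _ = |q (pr t)| * |x.1 - y.1| + |p (pr t)| * |x.2 - y.2| := by rw [abs_mul, abs_mul]
        _ ≤ Mq * dist x y + Mp * dist x y := by
            have h1 : |x.1 - y.1| = dist x.1 y.1 := (Real.dist_eq _ _).symm
            have h2 : |x.2 - y.2| = dist x.2 y.2 := (Real.dist_eq _ _).symm
            rw [h1, h2]
            exact add_le_add (mul_le_mul hqb hd1 dist_nonneg hMq0)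
              (mul_le_mul hpb hd2 dist_nonneg hMp0)
        _ = (Mp + Mq) * dist x y := by ring
        _ ≤ max 1 (Mp + Mq) * dist x y :=
          mul_le_mul_of_nonneg_right (le_max_right _ _) hd0
  -- the two solutions
  set f : ℝ → ℝ × ℝ := fun t => (φ t, deriv φ t) with hf
  set g : ℝ → ℝ × ℝ :=
    fun t => (β₁ * Y1 m b t + β₂ * Y2 m b t, β₁ * Y1d m b t + β₂ * Y2d m b t) with hg
  have hIoosub : Set.Ioo a c ⊆ I := fun t ht => hIcc (Set.Ioo_subset_Icc_self ht)
  have hfsol : ∀ t ∈ Set.Ioo a c, HasDerivAt f (v t (f t)) t ∧ f t ∈ (fun _ => Set.univ) t := by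
    intro t ht
    have htI : t ∈ I := hIoosub ht
    have htne : t ≠ 0 := hne t htI
    refine ⟨?_, Set.mem_univ _⟩
    have hD : HasDerivAt f (deriv φ t, deriv (deriv φ) t) t :=
      HasDerivAt.prodMk ((hφ t htI).hasDerivAt) ((hφ' t htI).hasDerivAt)
    convert hD using 1
    rw [hv, hf]
    simp only
    rw [hprid t (Set.Ioo_subset_Icc_self ht)]
    refine Prod.ext rfl ?_
    simp only [hp, hq]
    rw [hode' t htI]
    ring
  have hgsol : ∀ t ∈ Set.Ioo a c, HasDerivAt g (v t (g t)) t ∧ g t ∈ (fun _ => Set.univ) t := by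
    intro t ht
    have htI : t ∈ I := hIoosub ht
    have htne : t ≠ 0 := hne t htI
    refine ⟨?_, Set.mem_univ _⟩
    have hD : HasDerivAt g
        (β₁ * Y1d m b t + β₂ * Y2d m b t, β₁ * Y1dd m b t + β₂ * Y2dd m b t) t := by
      refine HasDerivAt.prodMk ?_ ?_
      · exact ((hasDerivAt_Y1 m hm b htne).const_mul β₁).add
          ((hasDerivAt_Y2 m b t).const_mul β₂)
      · exact ((hasDerivAt_Y1d m hm b htne).const_mul β₁).add
          ((hasDerivAt_Y2d m b t).const_mul β₂)
    convert hD using 1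
    rw [hv, hg]
    simp only
    rw [hprid t (Set.Ioo_subset_Icc_self ht)]
    refine Prod.ext rfl ?_
    simp only [hp, hq]
    rw [ode1 m hm b htne, ode2 m hm b htne]
    ring
  have heq0 : f τ₀ = g τ₀ := by
    rw [hf, hg]
    exact Prod.ext hval.symm hder.symm
  have := ODE_solution_unique_of_mem_Ioo (fun t _ => hlip t) hτ₀mem hfsol hgsol heq0 hτ₁mem
  have h1 := congrArg Prod.fst this
  simpa [hf, hg] using h1
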